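/- arXiv:1110.4999 — 11 statements merged into one kernel-verified Lean document; each statement's English description precedes it below -/
import Mathlib

section
/- For every q > 0, R_UB1 − R1(q) < ½·log₂(1 + s/q) + ½. -/
/-- For every `q > 0`, `R_UB1 - R1(q) < ½·log₂(1 + s/q) + ½`,
where `s = 1 - ρz²`. -/
theorem gap_RUB1_R1
    (hSD hRD hSR ρz : ℝ)
    (hSD_nn : 0 ≤ hSD) (hRD_nn : 0 ≤ hRD) (hSR_nn : 0 ≤ hSR)
    (hρz_lb : -1 < ρz) (hρz_ub : ρz < 1)
    (q : ℝ) (hq : 0 < q) :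
    (1/2 * Real.logb 2 (1 + hSD^2 + hRD^2 + 2*hSD*hRD))
      - (1/2 * Real.logb 2 (1 + hSD^2 + hRD^2)
          - 1/2 * Real.logb 2 (1 + (1 - ρz^2) / q))
      < 1/2 * Real.logb 2 (1 + (1 - ρz^2) / q) + 1/2 := by
  have hY : (0:ℝ) < 1 + hSD^2 + hRD^2 := by positivity
  have hX : (0:ℝ) < 1 + hSD^2 + hRD^2 + 2*hSD*hRD := by positivity
  have hlt : 1 + hSD^2 + hRD^2 + 2*hSD*hRD < 2 * (1 + hSD^2 + hRD^2) := by
    nlinarith [sq_nonneg (hSD - hRD)]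
  have h1 : Real.logb 2 (1 + hSD^2 + hRD^2 + 2*hSD*hRD)
      < Real.logb 2 (2 * (1 + hSD^2 + hRD^2)) :=
    Real.logb_lt_logb (by norm_num) hX hlt
  have h2 : Real.logb 2 (2 * (1 + hSD^2 + hRD^2))
      = 1 + Real.logb 2 (1 + hSD^2 + hRD^2) := by
    rw [Real.logb_mul (by norm_num) (ne_of_gt hY), Real.logb_self_eq_one] <;> norm_num
  rw [h2] at h1
  linarith
end

section
/- For every q > 0, min{ R_UB1, R_UB2 } − min{ R1(q), R2(q) } < max{ ½·log₂(1 + s/q) + ½, ½·log₂(1 + q/s) }. -/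
/-- For every `q > 0`,
`min{R_UB1, R_UB2} - min{R1(q), R2(q)} < max{½·log₂(1 + s/q) + ½, ½·log₂(1 + q/s)}`,
where `s = 1 - ρz²`. -/
theorem gap_cutset_nnc
    (hSD hRD hSR ρz : ℝ)
    (hSD_nn : 0 ≤ hSD) (hRD_nn : 0 ≤ hRD) (hSR_nn : 0 ≤ hSR)
    (hρz_lb : -1 < ρz) (hρz_ub : ρz < 1)
    (q : ℝ) (hq : 0 < q) :
    min (1/2 * Real.logb 2 (1 + hSD^2 + hRD^2 + 2*hSD*hRD))
        (1/2 * Real.logb 2 (1 + (hSD^2 + hSR^2 - 2*ρz*hSD*hSR) / (1 - ρz^2)))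
      - min (1/2 * Real.logb 2 (1 + hSD^2 + hRD^2)
              - 1/2 * Real.logb 2 (1 + (1 - ρz^2) / q))
            (1/2 * Real.logb 2 (1 + (q + (q+1)*hSD^2 + hSR^2 - 2*ρz*hSD*hSR) / (1 - ρz^2))
              - 1/2 * Real.logb 2 (1 + q / (1 - ρz^2)))
      < max (1/2 * Real.logb 2 (1 + (1 - ρz^2) / q) + 1/2)
            (1/2 * Real.logb 2 (1 + q / (1 - ρz^2))) := by
  set s : ℝ := 1 - ρz^2 with hs_def
  have hs : 0 < s := by nlinarith
  set x : ℝ := hSD^2 + hRD^2 with hx_def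
  have hx : 0 ≤ x := by positivity
  set K : ℝ := hSD^2 + hSR^2 - 2*ρz*hSD*hSR with hK_def
  have hK : 0 ≤ K := by
    nlinarith [sq_nonneg (hSD - hSR), sq_nonneg (hSD + hSR),
      mul_nonneg hSD_nn hSR_nn]
  -- Part 1 : A - C < G1
  have h1 : Real.logb 2 (1 + hSD^2 + hRD^2 + 2*hSD*hRD)
      < Real.logb 2 (1 + hSD^2 + hRD^2) + 1 := by
    have hlt : 1 + hSD^2 + hRD^2 + 2*hSD*hRD < 2 * (1 + hSD^2 + hRD^2) := by
      nlinarith [sq_nonneg (hSD - hRD)]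
    have hpos : (0:ℝ) < 1 + hSD^2 + hRD^2 + 2*hSD*hRD := by
      nlinarith [mul_nonneg hSD_nn hRD_nn]
    have hpos2 : (0:ℝ) < 1 + hSD^2 + hRD^2 := by positivity
    calc Real.logb 2 (1 + hSD^2 + hRD^2 + 2*hSD*hRD)
        < Real.logb 2 (2 * (1 + hSD^2 + hRD^2)) :=
          Real.logb_lt_logb (by norm_num) hpos hlt
      _ = Real.logb 2 (1 + hSD^2 + hRD^2) + 1 := by
          rw [Real.logb_mul (by norm_num) (ne_of_gt hpos2),
            Real.logb_self_eq_one (by norm_num)]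
          ring
  -- Part 2 : B - D < G2
  have h2 : Real.logb 2 (1 + K / s)
      < Real.logb 2 (1 + (q + (q+1)*hSD^2 + hSR^2 - 2*ρz*hSD*hSR) / s) := by
    apply Real.logb_lt_logb (by norm_num)
    · positivity
    · have hnum : K < q + (q+1)*hSD^2 + hSR^2 - 2*ρz*hSD*hSR := by
        have : q + (q+1)*hSD^2 + hSR^2 - 2*ρz*hSD*hSR = (q + q*hSD^2) + K := by
          rw [hK_def]; ring
        rw [this]
        nlinarith [sq_nonneg hSD]
      gcongr
  -- combine
  set A := 1/2 * Real.logb 2 (1 + hSD^2 + hRD^2 + 2*hSD*hRD) with hA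
  set B := 1/2 * Real.logb 2 (1 + K / s) with hB
  set C := 1/2 * Real.logb 2 (1 + hSD^2 + hRD^2) - 1/2 * Real.logb 2 (1 + s / q) with hC
  set D := 1/2 * Real.logb 2 (1 + (q + (q+1)*hSD^2 + hSR^2 - 2*ρz*hSD*hSR) / s)
      - 1/2 * Real.logb 2 (1 + q / s) with hD
  set G1 := 1/2 * Real.logb 2 (1 + s / q) + 1/2 with hG1
  set G2 := 1/2 * Real.logb 2 (1 + q / s) with hG2
  have hAC : A - C < G1 := by rw [hA, hC, hG1]; linarith
  have hBD : B - D < G2 := by rw [hB, hD, hG2]; linarith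
  rcases le_total C D with h | h
  · rw [min_eq_left h]
    calc min A B - C ≤ A - C := by have := min_le_left A B; linarith
      _ < G1 := hAC
      _ ≤ max G1 G2 := le_max_left _ _
  · rw [min_eq_right h]
    calc min A B - D ≤ B - D := by have := min_le_right A B; linarith
      _ < G2 := hBD
      _ ≤ max G1 G2 := le_max_right _ _
end

section
/- For every q > 0, max{ ½·log₂(1 + s/q) + ½, ½·log₂(1 + q/s) } ≥ ½·log₂(3), with equality if and only if q = 2·s. (That is, the quantization level q* = 2(1 − ρ_z²) minimizes the maximum of the two gap terms, and the minimax value equals ½·log₂ 3.) -/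
/-- For every `q > 0`,
`max{½·log₂(1 + s/q) + ½, ½·log₂(1 + q/s)} ≥ ½·log₂ 3`, with equality iff
`q = 2·s`, where `s = 1 - ρz² > 0`. -/
theorem minimax_gap_term
    (ρz : ℝ) (hρz_lb : -1 < ρz) (hρz_ub : ρz < 1)
    (q : ℝ) (hq : 0 < q) :
    (1/2 * Real.logb 2 3
        ≤ max (1/2 * Real.logb 2 (1 + (1 - ρz^2) / q) + 1/2)
              (1/2 * Real.logb 2 (1 + q / (1 - ρz^2))))
    ∧ (max (1/2 * Real.logb 2 (1 + (1 - ρz^2) / q) + 1/2)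
           (1/2 * Real.logb 2 (1 + q / (1 - ρz^2)))
         = 1/2 * Real.logb 2 3
       ↔ q = 2 * (1 - ρz^2)) := by
  set s := 1 - ρz^2 with hs_def
  have hs : 0 < s := by nlinarith
  have h1 : (0:ℝ) < 1 + s / q := by positivity
  have h2 : (0:ℝ) < 1 + q / s := by positivity
  have hA : 1/2 * Real.logb 2 (1 + s / q) + 1/2
      = 1/2 * Real.logb 2 (2 * (1 + s / q)) := by
    rw [Real.logb_mul (by norm_num) (ne_of_gt h1),
      Real.logb_self_eq_one (by norm_num : (1:ℝ) < 2)]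
    ring
  have h2b : (0:ℝ) < 2 * (1 + s / q) := by positivity
  -- comparison facts
  have key : 2 * (1 + s / q) ≥ 3 ∨ 1 + q / s ≥ 3 := by
    rcases le_or_gt q (2 * s) with h | h
    · left
      have : 1/2 ≤ s / q := by rw [le_div_iff₀ hq]; linarith
      linarith
    · right
      have : 2 ≤ q / s := by rw [le_div_iff₀ hs]; linarith
      linarith
  have hge : 1/2 * Real.logb 2 3
      ≤ max (1/2 * Real.logb 2 (1 + s / q) + 1/2)
            (1/2 * Real.logb 2 (1 + q / s)) := by
    rcases key with h | h
    · refine le_max_of_le_left ?_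
      rw [hA]
      have := Real.logb_le_logb_of_le (by norm_num : (1:ℝ) < 2)
        (by norm_num : (0:ℝ) < 3) h
      linarith
    · refine le_max_of_le_right ?_
      have := Real.logb_le_logb_of_le (by norm_num : (1:ℝ) < 2)
        (by norm_num : (0:ℝ) < 3) h
      linarith
  refine ⟨hge, ?_, ?_⟩
  · intro hmax
    have hAle : 1/2 * Real.logb 2 (1 + s / q) + 1/2 ≤ 1/2 * Real.logb 2 3 := by
      rw [← hmax]; exact le_max_left _ _
    have hBle : 1/2 * Real.logb 2 (1 + q / s) ≤ 1/2 * Real.logb 2 3 := by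
      rw [← hmax]; exact le_max_right _ _
    rw [hA] at hAle
    have hAle' : Real.logb 2 (2 * (1 + s / q)) ≤ Real.logb 2 3 := by linarith
    have hBle' : Real.logb 2 (1 + q / s) ≤ Real.logb 2 3 := by linarith
    rw [Real.logb_le_logb (by norm_num : (1:ℝ) < 2) h2b (by norm_num)] at hAle'
    rw [Real.logb_le_logb (by norm_num : (1:ℝ) < 2) h2 (by norm_num)] at hBle'
    have hx : s / q ≤ 1/2 := by linarith
    have hy : q / s ≤ 2 := by linarith
    have h1' : q ≤ 2 * s := by
      have := (div_le_iff₀ hs).mp hy; linarith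
    have h2' : 2 * s ≤ q := by
      have := (div_le_iff₀ hq).mp hx; linarith
    linarith
  · intro hqe
    subst hqe
    have hsq : s / (2 * s) = 1/2 := by field_simp
    have hqs : (2 * s) / s = 2 := by field_simp
    rw [hsq, hqs]
    have h32 : Real.logb 2 (1 + 1/2 : ℝ) = Real.logb 2 3 - 1 := by
      have : (1 + 1/2 : ℝ) = 3 / 2 := by norm_num
      rw [this, Real.logb_div (by norm_num) (by norm_num),
        Real.logb_self_eq_one (by norm_num : (1:ℝ) < 2)]
    rw [h32]
    have e1 : 1/2*(Real.logb 2 3 - 1) + 1/2 = 1/2*Real.logb 2 3 := by ring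
    have e2 : (1:ℝ) + 2 = 3 := by norm_num
    rw [e2, e1, max_self]
end

section
/- (Theorem 1, algebraic core.) With the correlation-aware quantization level q* := 2·s, the noisy-network-coding rate is within ½·log₂ 3 of the cut-set bound: min{ R_UB1, R_UB2 } − min{ R1(q*), R2(q*) } < ½·log₂(3). -/
/-- Theorem 1, algebraic core: With the correlation-aware
quantization level `q* = 2·s` (where `s = 1 - ρz²`), the noisy-network-coding
rate is within `½·log₂ 3` of the cut-set bound:
`min{R_UB1, R_UB2} - min{R1(q*), R2(q*)} < ½·log₂ 3`. -/
theorem nnc_within_half_log_three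
    (hSD hRD hSR ρz : ℝ)
    (hSD_nn : 0 ≤ hSD) (hRD_nn : 0 ≤ hRD) (hSR_nn : 0 ≤ hSR)
    (hρz_lb : -1 < ρz) (hρz_ub : ρz < 1) :
    min (1/2 * Real.logb 2 (1 + hSD^2 + hRD^2 + 2*hSD*hRD))
        (1/2 * Real.logb 2 (1 + (hSD^2 + hSR^2 - 2*ρz*hSD*hSR) / (1 - ρz^2)))
      - min (1/2 * Real.logb 2 (1 + hSD^2 + hRD^2)
              - 1/2 * Real.logb 2 (1 + (1 - ρz^2) / (2 * (1 - ρz^2))))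
            (1/2 * Real.logb 2
                (1 + (2 * (1 - ρz^2) + (2 * (1 - ρz^2) + 1)*hSD^2 + hSR^2
                      - 2*ρz*hSD*hSR) / (1 - ρz^2))
              - 1/2 * Real.logb 2 (1 + 2 * (1 - ρz^2) / (1 - ρz^2)))
      < 1/2 * Real.logb 2 3 := by
  have hs : 0 < 1 - ρz^2 := by nlinarith
  have hsne : (1 - ρz^2) ≠ 0 := ne_of_gt hs
  have h1 : (1:ℝ) + (1 - ρz^2) / (2 * (1 - ρz^2)) = 3/2 := by
    field_simp; ring
  have h2 : (1:ℝ) + 2 * (1 - ρz^2) / (1 - ρz^2) = 3 := by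
    field_simp; ring
  rw [h1, h2]
  have hab : 0 ≤ hSD * hRD := mul_nonneg hSD_nn hRD_nn
  have hB0 : 0 ≤ hSD^2 + hSR^2 - 2*ρz*hSD*hSR := by
    nlinarith [sq_nonneg (hSD - hSR), sq_nonneg (hSD + hSR), mul_nonneg hSD_nn hSR_nn]
  -- logb 2 (3/2) = logb 2 3 - 1
  have l32 : Real.logb 2 (3/2 : ℝ) = Real.logb 2 3 - 1 := by
    rw [Real.logb_div (by norm_num) (by norm_num),
      Real.logb_self_eq_one (by norm_num)]
  -- key inequality 1 : UB1 - R1 < ½ logb 3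
  have key1 : 1/2 * Real.logb 2 (1 + hSD^2 + hRD^2 + 2*hSD*hRD)
      - (1/2 * Real.logb 2 (1 + hSD^2 + hRD^2) - 1/2 * Real.logb 2 (3/2))
      < 1/2 * Real.logb 2 3 := by
    have e1 : Real.logb 2 (2 * (1 + hSD^2 + hRD^2))
        = 1 + Real.logb 2 (1 + hSD^2 + hRD^2) := by
      rw [Real.logb_mul (by norm_num) (by positivity),
        Real.logb_self_eq_one (by norm_num)]
    have lt1 : Real.logb 2 (1 + hSD^2 + hRD^2 + 2*hSD*hRD)
        < Real.logb 2 (2 * (1 + hSD^2 + hRD^2)) := by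
      apply Real.logb_lt_logb (by norm_num)
      · positivity
      · nlinarith [sq_nonneg (hSD - hRD)]
    rw [l32]
    linarith [lt1, e1]
  -- key inequality 2 : UB2 - R2 < ½ logb 3
  have key2 : 1/2 * Real.logb 2 (1 + (hSD^2 + hSR^2 - 2*ρz*hSD*hSR) / (1 - ρz^2))
      - (1/2 * Real.logb 2
          (1 + (2 * (1 - ρz^2) + (2 * (1 - ρz^2) + 1)*hSD^2 + hSR^2
                - 2*ρz*hSD*hSR) / (1 - ρz^2))
        - 1/2 * Real.logb 2 3)
      < 1/2 * Real.logb 2 3 := by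
    have lt2 : Real.logb 2 (1 + (hSD^2 + hSR^2 - 2*ρz*hSD*hSR) / (1 - ρz^2))
        < Real.logb 2
          (1 + (2 * (1 - ρz^2) + (2 * (1 - ρz^2) + 1)*hSD^2 + hSR^2
                - 2*ρz*hSD*hSR) / (1 - ρz^2)) := by
      apply Real.logb_lt_logb (by norm_num)
      · have : 0 ≤ (hSD^2 + hSR^2 - 2*ρz*hSD*hSR) / (1 - ρz^2) :=
          div_nonneg hB0 (le_of_lt hs)
        linarith
      · have hnum : hSD^2 + hSR^2 - 2*ρz*hSD*hSR
            < 2 * (1 - ρz^2) + (2 * (1 - ρz^2) + 1)*hSD^2 + hSR^2 - 2*ρz*hSD*hSR := by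
          nlinarith [sq_nonneg hSD]
        gcongr
    linarith [lt2]
  -- combine
  have hU1 := min_le_left (1/2 * Real.logb 2 (1 + hSD^2 + hRD^2 + 2*hSD*hRD))
      (1/2 * Real.logb 2 (1 + (hSD^2 + hSR^2 - 2*ρz*hSD*hSR) / (1 - ρz^2)))
  have hU2 := min_le_right (1/2 * Real.logb 2 (1 + hSD^2 + hRD^2 + 2*hSD*hRD))
      (1/2 * Real.logb 2 (1 + (hSD^2 + hSR^2 - 2*ρz*hSD*hSR) / (1 - ρz^2)))
  rcases le_total
      (1/2 * Real.logb 2 (1 + hSD^2 + hRD^2) - 1/2 * Real.logb 2 (3/2))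
      (1/2 * Real.logb 2
          (1 + (2 * (1 - ρz^2) + (2 * (1 - ρz^2) + 1)*hSD^2 + hSR^2
                - 2*ρz*hSD*hSR) / (1 - ρz^2))
        - 1/2 * Real.logb 2 3) with h | h
  · rw [min_eq_left h]; linarith
  · rw [min_eq_right h]; linarith
end

section
/- On (0, ∞), the function q ↦ R1(q) is strictly increasing, and the function q ↦ R2(q) is nonincreasing; moreover R2 is strictly decreasing whenever h_SR ≠ ρ_z·h_SD. -/
/-- On `(0, ∞)`, `q ↦ R1(q)` is strictly increasing and
`q ↦ R2(q)` is nonincreasing; moreover `R2` is strictly decreasing whenever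
`h_SR ≠ ρz·h_SD`. Here `s = 1 - ρz²`. -/
theorem R1_strictMono_R2_anti
    (hSD hRD hSR ρz : ℝ)
    (hSD_nn : 0 ≤ hSD) (hRD_nn : 0 ≤ hRD) (hSR_nn : 0 ≤ hSR)
    (hρz_lb : -1 < ρz) (hρz_ub : ρz < 1) :
    StrictMonoOn (fun q : ℝ =>
        1/2 * Real.logb 2 (1 + hSD^2 + hRD^2)
          - 1/2 * Real.logb 2 (1 + (1 - ρz^2) / q)) (Set.Ioi 0)
    ∧ AntitoneOn (fun q : ℝ =>
        1/2 * Real.logb 2 (1 + (q + (q+1)*hSD^2 + hSR^2 - 2*ρz*hSD*hSR) / (1 - ρz^2))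
          - 1/2 * Real.logb 2 (1 + q / (1 - ρz^2))) (Set.Ioi 0)
    ∧ (hSR ≠ ρz * hSD →
        StrictAntiOn (fun q : ℝ =>
          1/2 * Real.logb 2 (1 + (q + (q+1)*hSD^2 + hSR^2 - 2*ρz*hSD*hSR) / (1 - ρz^2))
            - 1/2 * Real.logb 2 (1 + q / (1 - ρz^2))) (Set.Ioi 0)) := by
  have h2 : (1:ℝ) < 2 := one_lt_two
  have hs : (0:ℝ) < 1 - ρz^2 := by nlinarith
  -- abbreviations
  set s : ℝ := 1 - ρz^2 with hsdef
  set a : ℝ := 1 + hSD^2 with hadef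
  set c : ℝ := s + hSD^2 + hSR^2 - 2*ρz*hSD*hSR with hcdef
  have ha : (0:ℝ) < a := by positivity
  have hc : (0:ℝ) < c := by
    have hm : 0 ≤ hSD * hSR := mul_nonneg hSD_nn hSR_nn
    nlinarith [sq_nonneg (hSD - hSR), sq_nonneg (hSD + hSR)]
  have hkey : c - a * s = (hSR - ρz*hSD)^2 := by
    simp only [hsdef, hadef, hcdef]; ring
  -- rewrite the R2 log arguments
  have hA : ∀ q : ℝ, 1 + (q + (q+1)*hSD^2 + hSR^2 - 2*ρz*hSD*hSR) / s = (a*q + c) / s := by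
    intro q
    field_simp
    simp only [hadef, hcdef]; ring
  have hB : ∀ q : ℝ, 1 + q / s = (q + s) / s := by
    intro q; field_simp; ring
  have hApos : ∀ q : ℝ, 0 < q → 0 < (a*q + c) / s := by
    intro q hq; positivity
  have hBpos : ∀ q : ℝ, 0 < q → 0 < (q + s) / s := by
    intro q hq; positivity
  -- core comparison for R2
  have core : ∀ x y : ℝ, 0 < x → x < y →
      ((a*y + c)/s) * ((x + s)/s) ≤ ((a*x + c)/s) * ((y + s)/s)
      ∧ (hSR ≠ ρz * hSD →
        ((a*y + c)/s) * ((x + s)/s) < ((a*x + c)/s) * ((y + s)/s)) := by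
    intro x y hx hxy
    have hss : (0:ℝ) < s * s := by positivity
    have key2 : (a*x + c)*(y+s)*(s*s) - (a*y + c)*(x+s)*(s*s)
        = (s*s)*(y-x)*((hSR - ρz*hSD)^2) := by rw [← hkey]; ring
    constructor
    · rw [div_mul_div_comm, div_mul_div_comm, div_le_div_iff₀ hss hss]
      have hsq : 0 ≤ (hSR - ρz*hSD)^2 := sq_nonneg _
      nlinarith [mul_nonneg (mul_nonneg hss.le (sub_nonneg.mpr hxy.le)) hsq]
    · intro hne
      have h0 : hSR - ρz*hSD ≠ 0 := sub_ne_zero.mpr hne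
      have hsq : 0 < (hSR - ρz*hSD)^2 :=
        lt_of_le_of_ne (sq_nonneg _) (Ne.symm (pow_ne_zero 2 h0))
      rw [div_mul_div_comm, div_mul_div_comm, div_lt_div_iff₀ hss hss]
      nlinarith [mul_pos (mul_pos hss (sub_pos.mpr hxy)) hsq]
  -- R2 value comparison
  have R2cmp : ∀ x y : ℝ, 0 < x → x < y →
      (1/2 * Real.logb 2 (1 + (y + (y+1)*hSD^2 + hSR^2 - 2*ρz*hSD*hSR) / s)
        - 1/2 * Real.logb 2 (1 + y / s))
      ≤ (1/2 * Real.logb 2 (1 + (x + (x+1)*hSD^2 + hSR^2 - 2*ρz*hSD*hSR) / s)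
        - 1/2 * Real.logb 2 (1 + x / s))
      ∧ (hSR ≠ ρz * hSD →
      (1/2 * Real.logb 2 (1 + (y + (y+1)*hSD^2 + hSR^2 - 2*ρz*hSD*hSR) / s)
        - 1/2 * Real.logb 2 (1 + y / s))
      < (1/2 * Real.logb 2 (1 + (x + (x+1)*hSD^2 + hSR^2 - 2*ρz*hSD*hSR) / s)
        - 1/2 * Real.logb 2 (1 + x / s))) := by
    intro x y hx hxy
    have hy : 0 < y := hx.trans hxy
    rw [hA x, hA y, hB x, hB y]
    have hAx := hApos x hx
    have hAy := hApos y hy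
    have hBx := hBpos x hx
    have hBy := hBpos y hy
    have hdx : Real.logb 2 ((a*x + c)/s) - Real.logb 2 ((x + s)/s)
        = Real.logb 2 (((a*x + c)/s) / ((x + s)/s)) :=
      (Real.logb_div (ne_of_gt hAx) (ne_of_gt hBx)).symm
    have hdy : Real.logb 2 ((a*y + c)/s) - Real.logb 2 ((y + s)/s)
        = Real.logb 2 (((a*y + c)/s) / ((y + s)/s)) :=
      (Real.logb_div (ne_of_gt hAy) (ne_of_gt hBy)).symm
    obtain ⟨hle, hlt⟩ := core x y hx hxy
    constructor
    · have hr : ((a*y + c)/s) / ((y + s)/s) ≤ ((a*x + c)/s) / ((x + s)/s) := by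
        rw [div_le_div_iff₀ hBy hBx]; linarith
      have := Real.logb_le_logb_of_le h2 (div_pos hAy hBy) hr
      linarith [this, hdx ▸ hdy ▸ this]
    · intro hne
      have hr : ((a*y + c)/s) / ((y + s)/s) < ((a*x + c)/s) / ((x + s)/s) := by
        rw [div_lt_div_iff₀ hBy hBx]; linarith [hlt hne]
      have hpos : 0 < ((a*y + c)/s) / ((y + s)/s) := div_pos hAy hBy
      have := Real.logb_lt_logb h2 hpos hr
      linarith [this, hdx ▸ hdy ▸ this]
  refine ⟨?_, ?_, ?_⟩
  · -- R1 strictly increasing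
    intro x hx y hy hxy
    simp only
    have hx0 : (0:ℝ) < x := hx
    have hy0 : (0:ℝ) < y := hy
    have h1 : (0:ℝ) < 1 + s / y := by positivity
    have hlt : 1 + s / y < 1 + s / x := by
      have : s / y < s / x := by
        rw [div_lt_div_iff₀ hy0 hx0]; nlinarith
      linarith
    have := Real.logb_lt_logb h2 h1 hlt
    linarith
  · -- R2 antitone
    intro x hx y hy hxy
    rcases eq_or_lt_of_le hxy with rfl | hxy'
    · exact le_rfl
    · exact (R2cmp x y hx hxy').1
  · -- R2 strict antitone
    intro hne x hx y hy hxy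
    exact (R2cmp x y hx hxy).2 hne
end

section
/- At the compress-and-forward quantization level q_c, the two noisy-network-coding rate expressions coincide with the compress-and-forward rate: R1(q_c) = R_CF and R2(q_c) = R_CF. -/
/-- At the compress-and-forward quantization level `q_c`, the two
noisy-network-coding rate expressions coincide with the compress-and-forward
rate: `R1(q_c) = R_CF` and `R2(q_c) = R_CF`. Here `s = 1 - ρz²`. -/
theorem R1_R2_eq_RCF_at_qc
    (hSD hRD hSR ρz : ℝ)
    (hSD_nn : 0 ≤ hSD) (hRD_pos : 0 < hRD) (hSR_nn : 0 ≤ hSR)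
    (hρz_lb : -1 < ρz) (hρz_ub : ρz < 1) :
    (1/2 * Real.logb 2 (1 + hSD^2 + hRD^2)
        - 1/2 * Real.logb 2 (1 + (1 - ρz^2) /
            (((1 - ρz^2) * (1 + hSD^2) + (hSR - ρz*hSD)^2) / hRD^2))
      = 1/2 * Real.logb 2 (1 + hSD^2 + (hSR - ρz*hSD)^2 /
          ((1 - ρz^2) + ((1 - ρz^2) * (1 + hSD^2) + (hSR - ρz*hSD)^2) / hRD^2)))
    ∧ (1/2 * Real.logb 2
          (1 + ((((1 - ρz^2) * (1 + hSD^2) + (hSR - ρz*hSD)^2) / hRD^2)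
                + ((((1 - ρz^2) * (1 + hSD^2) + (hSR - ρz*hSD)^2) / hRD^2) + 1) * hSD^2
                + hSR^2 - 2*ρz*hSD*hSR) / (1 - ρz^2))
        - 1/2 * Real.logb 2
            (1 + (((1 - ρz^2) * (1 + hSD^2) + (hSR - ρz*hSD)^2) / hRD^2) / (1 - ρz^2))
      = 1/2 * Real.logb 2 (1 + hSD^2 + (hSR - ρz*hSD)^2 /
          ((1 - ρz^2) + ((1 - ρz^2) * (1 + hSD^2) + (hSR - ρz*hSD)^2) / hRD^2))) := by
  have hs : (0:ℝ) < 1 - ρz^2 := by nlinarith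
  have hRD2 : (0:ℝ) < hRD^2 := by positivity
  have hN : (0:ℝ) < (1 - ρz^2) * (1 + hSD^2) + (hSR - ρz*hSD)^2 := by
    nlinarith [sq_nonneg (hSR - ρz*hSD), sq_nonneg hSD]
  have hq : (0:ℝ) < ((1 - ρz^2) * (1 + hSD^2) + (hSR - ρz*hSD)^2) / hRD^2 :=
    div_pos hN hRD2
  set s : ℝ := 1 - ρz^2 with hs_def
  set q : ℝ := ((1 - ρz^2) * (1 + hSD^2) + (hSR - ρz*hSD)^2) / hRD^2 with hq_def
  have hsq : (0:ℝ) < s + q := by linarith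
  have hT : (0:ℝ) < 1 + hSD^2 + (hSR - ρz*hSD)^2 / (s + q) := by positivity
  have hX1 : (0:ℝ) < 1 + s / q := by positivity
  have hX2 : (0:ℝ) < 1 + q / s := by positivity
  have hqmul : q * hRD^2 = s * (1 + hSD^2) + (hSR - ρz*hSD)^2 := by
    rw [hq_def]; field_simp; rw [hs_def]; ring
  constructor
  · have key : 1 + hSD^2 + hRD^2
        = (1 + s / q) * (1 + hSD^2 + (hSR - ρz*hSD)^2 / (s + q)) := by
      field_simp
      nlinarith [hqmul, sq_nonneg hRD]
    rw [key, Real.logb_mul (ne_of_gt hX1) (ne_of_gt hT)]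
    ring
  · have key : 1 + (q + (q + 1) * hSD^2 + hSR^2 - 2*ρz*hSD*hSR) / s
        = (1 + q / s) * (1 + hSD^2 + (hSR - ρz*hSD)^2 / (s + q)) := by
      have hsub : q + (q + 1) * hSD^2 + hSR^2 - 2*ρz*hSD*hSR
          = (q + (q + 1) * hSD^2) + (hSR^2 - 2*ρz*hSD*hSR) := by ring
      field_simp
      rw [hs_def]; ring
    rw [key, Real.logb_mul (ne_of_gt hX2) (ne_of_gt hT)]
    ring
end

section
/- For every q > 0, min{ R1(q), R2(q) } ≤ R_CF. (That is, the compress-and-forward rate equals the maximum over all quantization levels q > 0 of the noisy-network-coding rate min{R1(q), R2(q)}, and in particular dominates it at any fixed q.) -/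
lemma half_logb_sub_le {x y t : ℝ} (hx : 0 < x) (hy : 0 < y) (ht : 0 < t)
    (h : x ≤ y * t) :
    1/2 * Real.logb 2 x - 1/2 * Real.logb 2 y ≤ 1/2 * Real.logb 2 t := by
  have h1 : Real.logb 2 x ≤ Real.logb 2 (y * t) :=
    Real.logb_le_logb_of_le (by norm_num) hx h
  rw [Real.logb_mul hy.ne' ht.ne'] at h1
  linarith

/-- For every `q > 0`, `min{R1(q), R2(q)} ≤ R_CF`, i.e. the
compress-and-forward rate dominates the noisy-network-coding rate at any
quantization level. Here `s = 1 - ρz²` and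
`q_c = (s·(1 + h_SD²) + (h_SR - ρz·h_SD)²)/h_RD²`. -/
theorem nnc_le_RCF
    (hSD hRD hSR ρz : ℝ)
    (hSD_nn : 0 ≤ hSD) (hRD_pos : 0 < hRD) (hSR_nn : 0 ≤ hSR)
    (hρz_lb : -1 < ρz) (hρz_ub : ρz < 1)
    (q : ℝ) (hq : 0 < q) :
    min (1/2 * Real.logb 2 (1 + hSD^2 + hRD^2)
          - 1/2 * Real.logb 2 (1 + (1 - ρz^2) / q))
        (1/2 * Real.logb 2 (1 + (q + (q+1)*hSD^2 + hSR^2 - 2*ρz*hSD*hSR) / (1 - ρz^2))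
          - 1/2 * Real.logb 2 (1 + q / (1 - ρz^2)))
      ≤ 1/2 * Real.logb 2 (1 + hSD^2 + (hSR - ρz*hSD)^2 /
          ((1 - ρz^2) + ((1 - ρz^2) * (1 + hSD^2) + (hSR - ρz*hSD)^2) / hRD^2)) := by
  have hs : 0 < 1 - ρz^2 := by nlinarith
  set s : ℝ := 1 - ρz^2 with hs_def
  set a : ℝ := hSD^2 with ha_def
  set b : ℝ := (hSR - ρz*hSD)^2 with hb_def
  set c : ℝ := hRD^2 with hc_def
  have hc : 0 < c := by positivity
  have hb : 0 ≤ b := sq_nonneg _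
  have ha : 0 ≤ a := sq_nonneg _
  set Qc : ℝ := (s*(1+a)+b)/c with hQc_def
  have hQc : 0 < Qc := by
    rw [hQc_def]; positivity
  set D : ℝ := s + Qc with hD_def
  have hD : 0 < D := by rw [hD_def]; positivity
  set T : ℝ := 1 + a + b/D with hT_def
  have hT : 0 < T := by rw [hT_def]; positivity
  -- key identity: (1 + s/Qc) * T = 1 + a + c
  have hkey : (1 + s/Qc) * T = 1 + a + c := by
    rw [hT_def, hD_def, hQc_def]
    have h1 : s*(1+a)+b ≠ 0 := by positivity
    field_simp
    ring
  rcases le_total q Qc with h1 | h1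
  · refine le_trans (min_le_left _ _) ?_
    apply half_logb_sub_le (by positivity) (by positivity) hT
    have hmono : 1 + s/Qc ≤ 1 + s/q := by gcongr
    calc 1 + a + c = (1 + s/Qc) * T := hkey.symm
      _ ≤ (1 + s/q) * T := by
          exact mul_le_mul_of_nonneg_right hmono hT.le
  · refine le_trans (min_le_right _ _) ?_
    have hN : 0 < 1 + (q + (q+1)*a + hSR^2 - 2*ρz*hSD*hSR) / s := by
      have : q + (q+1)*a + hSR^2 - 2*ρz*hSD*hSR = q*(1+a) + b + s*a := by
        rw [hb_def, ha_def, hs_def]; ring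
      rw [this]; positivity
    apply half_logb_sub_le hN (by positivity) hT
    have hx_eq : 1 + (q + (q+1)*a + hSR^2 - 2*ρz*hSD*hSR) / s
        = (1 + q/s) * (1 + a + b/(s+q)) := by
      have hsq : s + q ≠ 0 := by positivity
      rw [hb_def, ha_def]
      field_simp
      ring
    have hmono : b/(s+q) ≤ b/D := by
      apply div_le_div_of_nonneg_left hb hD
      rw [hD_def]; linarith
    calc 1 + (q + (q+1)*a + hSR^2 - 2*ρz*hSD*hSR) / s
        = (1 + q/s) * (1 + a + b/(s+q)) := hx_eq
      _ ≤ (1 + q/s) * T := by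
          apply mul_le_mul_of_nonneg_left _ (by positivity)
          rw [hT_def]; linarith
end

section
/- (Corollary 1, algebraic core.) The compress-and-forward rate is within ½·log₂ 3 of the cut-set bound: min{ R_UB1, R_UB2 } − R_CF < ½·log₂(3). -/
/-- Corollary 1, algebraic core: The compress-and-forward rate
is within `½·log₂ 3` of the cut-set bound:
`min{R_UB1, R_UB2} - R_CF < ½·log₂ 3`. Here `s = 1 - ρz²` and
`q_c = (s·(1 + h_SD²) + (h_SR - ρz·h_SD)²)/h_RD²`. -/
theorem RCF_within_half_log_three
    (hSD hRD hSR ρz : ℝ)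
    (hSD_nn : 0 ≤ hSD) (hRD_pos : 0 < hRD) (hSR_nn : 0 ≤ hSR)
    (hρz_lb : -1 < ρz) (hρz_ub : ρz < 1) :
    min (1/2 * Real.logb 2 (1 + hSD^2 + hRD^2 + 2*hSD*hRD))
        (1/2 * Real.logb 2 (1 + (hSD^2 + hSR^2 - 2*ρz*hSD*hSR) / (1 - ρz^2)))
      - 1/2 * Real.logb 2 (1 + hSD^2 + (hSR - ρz*hSD)^2 /
          ((1 - ρz^2) + ((1 - ρz^2) * (1 + hSD^2) + (hSR - ρz*hSD)^2) / hRD^2))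
      < 1/2 * Real.logb 2 3 := by
  have hs_pos : 0 < 1 - ρz^2 := by nlinarith
  set s : ℝ := 1 - ρz^2 with hs
  set t : ℝ := hSR - ρz*hSD with ht
  have hr2 : 0 < hRD^2 := by positivity
  have hD_pos : 0 < s*hRD^2 + s*(1 + hSD^2) + t^2 := by positivity
  set D : ℝ := s*hRD^2 + s*(1 + hSD^2) + t^2 with hD
  -- rewrite X
  have hXeq : 1 + hSD^2 + t^2 / (s + (s * (1 + hSD^2) + t^2) / hRD^2)
      = 1 + hSD^2 + t^2*hRD^2/D := by
    rw [hD]; field_simp; ring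
  set X : ℝ := 1 + hSD^2 + t^2*hRD^2/D with hX
  have hX_pos : 0 < X := by positivity
  rw [hXeq]
  rw [sub_lt_iff_lt_add]
  have hsum : 1/2 * Real.logb 2 3 + 1/2 * Real.logb 2 X = 1/2 * Real.logb 2 (3*X) := by
    rw [Real.logb_mul (by norm_num) (ne_of_gt hX_pos)]; ring
  rw [hsum]
  rcases le_or_gt (2*s*hRD^2) (s*(1 + hSD^2) + t^2) with hcase | hcase
  · -- use R_UB1
    refine lt_of_le_of_lt (min_le_left _ _) ?_
    have hA1_pos : 0 < 1 + hSD^2 + hRD^2 + 2*hSD*hRD := by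
      nlinarith [mul_nonneg hSD_nn hRD_pos.le]
    have hkey : 1 + hSD^2 + hRD^2 + 2*hSD*hRD < 3*X := by
      rw [hX]
      rw [show (3:ℝ)*(1 + hSD^2 + t^2*hRD^2/D) = (3*(1+hSD^2)*D + 3*t^2*hRD^2)/D by
        field_simp]
      rw [lt_div_iff₀ hD_pos]
      have he : 0 ≤ s*(1 + hSD^2) + t^2 - 2*s*hRD^2 := by linarith
      nlinarith [mul_pos hs_pos hr2, mul_nonneg (mul_pos hs_pos hr2).le (sq_nonneg (hSD - hRD)),
        mul_nonneg he (sq_nonneg (hSD - hRD)), mul_nonneg he (sq_nonneg hSD),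
        mul_nonneg he (sq_nonneg hRD), he]
    have := Real.logb_lt_logb (by norm_num : (1:ℝ) < 2) hA1_pos hkey
    linarith
  · -- use R_UB2
    refine lt_of_le_of_lt (min_le_right _ _) ?_
    have hA2eq : 1 + (hSD^2 + hSR^2 - 2*ρz*hSD*hSR) / s = 1 + hSD^2 + t^2/s := by
      rw [hs, ht]; field_simp [show (1:ℝ) - ρz^2 ≠ 0 from hs_pos.ne']; ring
    rw [hA2eq]
    have hA2_pos : 0 < 1 + hSD^2 + t^2/s := by positivity
    have hkey : 1 + hSD^2 + t^2/s < 3*X := by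
      rw [hX]
      rw [show (3:ℝ)*(1 + hSD^2 + t^2*hRD^2/D) = (3*(1+hSD^2)*D + 3*t^2*hRD^2)/D by
        field_simp]
      rw [show 1 + hSD^2 + t^2/s = ((1+hSD^2)*s + t^2)/s by field_simp]
      rw [div_lt_div_iff₀ hs_pos hD_pos]
      nlinarith [mul_pos (mul_pos hs_pos hD_pos) (show (0:ℝ) < 1 + hSD^2 by positivity),
        mul_nonneg (sq_nonneg t) (show (0:ℝ) ≤ 2*s*hRD^2 - (s*(1+hSD^2) + t^2) by linarith)]
    have := Real.logb_lt_logb (by norm_num : (1:ℝ) < 2) hA2_pos hkey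
    linarith
end

section
/- The decode-and-forward gap to the cut-set bound is unbounded when the noises are fully correlated: for every M > 0 there exist channel gains h_SD, h_SR, h_RD with 1 < h_SD² < h_SR² < h_RD² such that C̄ − R_DF > M. -/
private lemma logb2_mono {x y : ℝ} (hx : 0 < x) (hxy : x ≤ y) :
    Real.logb 2 x ≤ Real.logb 2 y :=
  Real.logb_le_logb_of_le (by norm_num) hx hxy

private lemma logb2_strict {x y : ℝ} (hx : 0 < x) (hxy : x < y) :
    Real.logb 2 x < Real.logb 2 y :=
  Real.logb_lt_logb (by norm_num) hx hxy

/-- The decode-and-forward gap to the cut-set bound (at noise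
correlation `ρz = 1`) is unbounded: for every `M > 0` there exist channel
gains with `1 < h_SD² < h_SR² < h_RD²` such that `C̄ - R_DF > M`. -/
theorem df_gap_unbounded (M : ℝ) (hM : 0 < M) :
    ∃ hSD hSR hRD : ℝ, 0 ≤ hSD ∧ 0 ≤ hSR ∧ 0 ≤ hRD ∧
      1 < hSD^2 ∧ hSD^2 < hSR^2 ∧ hSR^2 < hRD^2 ∧
      (1/2 * Real.logb 2 (1 + hSD^2 + hRD^2 + 2*hSD*hRD))
        - max (1/2 * Real.logb 2 (1 + hSD^2))
              (min (1/2 * Real.logb 2 (1 + hSR^2))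
                   (1/2 * Real.logb 2 (1 + hSD^2 + hRD^2)))
        > M := by
  set t : ℝ := (2:ℝ) ^ (M + 2 : ℝ) with hts
  have ht0 : 0 < t := Real.rpow_pos_of_pos (by norm_num) _
  have ht4 : (4:ℝ) < t := by
    have h22 : ((2:ℝ) ^ (2:ℝ)) = 4 := by
      rw [show (2:ℝ) = ((2:ℕ):ℝ) by norm_num, Real.rpow_natCast]; norm_num
    calc (4:ℝ) = (2:ℝ) ^ (2:ℝ) := h22.symm
      _ < t := Real.rpow_lt_rpow_left_iff (by norm_num) |>.mpr (by linarith)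
  refine ⟨Real.sqrt 2, Real.sqrt 3, t, Real.sqrt_nonneg 2, Real.sqrt_nonneg 3, ht0.le, ?_⟩
  have h2 : (Real.sqrt 2)^2 = 2 := Real.sq_sqrt (by norm_num)
  have h3 : (Real.sqrt 3)^2 = 3 := Real.sq_sqrt (by norm_num)
  have ht2 : (16:ℝ) < t^2 := by nlinarith
  refine ⟨by rw [h2]; norm_num, by rw [h2, h3]; norm_num, by rw [h3]; nlinarith, ?_⟩
  rw [h2, h3]
  have hlog4 : Real.logb 2 (4:ℝ) = 2 := by
    rw [show (4:ℝ) = 2^(2:ℝ) by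
        rw [show (2:ℝ) = ((2:ℕ):ℝ) by norm_num, Real.rpow_natCast]; norm_num,
      Real.logb_rpow (by norm_num) (by norm_num)]
  have h1 : Real.logb 2 ((1:ℝ) + 3) = 2 := by norm_num [hlog4]
  have h0 : Real.logb 2 ((1:ℝ) + 2) < 2 := by
    have := logb2_strict (x := (1:ℝ) + 2) (y := 4) (by norm_num) (by norm_num)
    rwa [hlog4] at this
  have h2' : (2:ℝ) ≤ Real.logb 2 (1 + 2 + t^2) := by
    have := logb2_mono (x := 4) (y := 1 + 2 + t^2) (by norm_num) (by nlinarith)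
    rwa [hlog4] at this
  have hlogt : Real.logb 2 (t^2) = 2 * (M + 2) := by
    rw [Real.logb_pow, hts, Real.logb_rpow (by norm_num) (by norm_num)]
    push_cast; ring
  have hge : 2 * (M + 2) ≤ Real.logb 2 (1 + 2 + t^2 + 2 * Real.sqrt 2 * t) := by
    have hst : 0 ≤ Real.sqrt 2 * t := mul_nonneg (Real.sqrt_nonneg 2) ht0.le
    have := logb2_mono (x := t^2) (y := 1 + 2 + t^2 + 2 * Real.sqrt 2 * t)
      (by positivity) (by nlinarith)
    rwa [hlogt] at this
  generalize hB : Real.logb 2 (1 + 2 + t^2 + 2 * Real.sqrt 2 * t) = B at hge ⊢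
  generalize hC : Real.logb 2 ((1:ℝ) + 2 + t^2) = C at h2' ⊢
  generalize hA2 : Real.logb 2 ((1:ℝ) + 2) = A2 at h0 ⊢
  generalize hA3 : Real.logb 2 ((1:ℝ) + 3) = A3 at h1 ⊢
  rw [h1, min_eq_left (by linarith), max_eq_right (by linarith)]
  linarith
end

section
/- (Closed form of the single-tap amplify-and-forward rate with equal power allocation and fully correlated noises.) Suppose h_SD, h_SR, h_RD > 0, h_SD ≠ h_SR, and α ∈ (0, 1/√(1 + h_SR²)] with α·h_RD ≠ 1. Then (1/(4π))·∫₀^{2π} log₂( (N(ω) + |H(ω)|²) / N(ω) ) dω = ½·log₂( (A + √(A² − B²)) / (1 + α²·h_RD² + |1 − α²·h_RD²|) ), where A := 1 + h_SD² + α²·h_RD²·(1 + h_SR²) and B := 2·α·h_RD·(1 + h_SD·h_SR) (note A > |B| under these hypotheses). -/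
open Real Complex Metric intervalIntegral

lemma meanValue (f : ℂ → ℂ) (hf : DiffContOnCl ℂ f (ball 0 1)) :
    ∫ θ in (0:ℝ)..(2*π), f (circleMap 0 1 θ) = (2*π) * f 0 := by
  have h := hf.circleIntegral_sub_inv_smul (w := 0) (mem_ball_self one_pos)
  rw [circleIntegral] at h
  simp only [deriv_circleMap, smul_eq_mul, sub_zero] at h
  have heq : ∀ θ : ℝ, circleMap 0 1 θ * Complex.I * ((circleMap 0 1 θ)⁻¹ * f (circleMap 0 1 θ))
      = Complex.I * f (circleMap 0 1 θ) := by
    intro θ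
    have h0 : circleMap 0 1 θ ≠ 0 := circleMap_ne_center one_ne_zero
    field_simp
  rw [intervalIntegral.integral_congr (fun θ _ => heq θ),
    intervalIntegral.integral_const_mul] at h
  have hI : (Complex.I : ℂ) ≠ 0 := Complex.I_ne_zero
  exact mul_left_cancel₀ hI (h.trans (by ring))

lemma slit_mem {p q : ℝ} (hq : 0 ≤ q) (hpq : q < p) {z : ℂ} (hz : ‖z‖ ≤ 1) :
    ((p:ℂ) + q * z) ∈ Complex.slitPlane := by
  apply Or.inl
  have h1 : |z.re| ≤ 1 := le_trans (Complex.abs_re_le_norm z) hz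
  have h2 : ((p:ℂ) + q * z).re = p + q * z.re := by simp
  rw [h2]
  nlinarith [abs_le.mp h1]

lemma logIntegral (p q : ℝ) (hq : 0 ≤ q) (hpq : q < p) :
    ∫ θ in (0:ℝ)..(2*π), Complex.log ((p:ℂ) + q * circleMap 0 1 θ)
      = (2*π) * Complex.log (p:ℂ) := by
  have hdiff : DifferentiableOn ℂ (fun z => Complex.log ((p:ℂ) + q * z)) (closedBall 0 1) := by
    intro z hz
    have hz' : ‖z‖ ≤ 1 := by simpa [Complex.dist_eq] using mem_closedBall.mp hz
    exact ((Complex.differentiableAt_log (slit_mem hq hpq hz')).comp z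
      (((differentiable_const _).add ((differentiable_const _).mul differentiable_id)) z)).differentiableWithinAt
  have hdc : DiffContOnCl ℂ (fun z => Complex.log ((p:ℂ) + q * z)) (ball 0 1) := by
    apply DifferentiableOn.diffContOnCl
    rwa [closure_ball (0:ℂ) one_ne_zero]
  have := meanValue _ hdc
  simpa using this

lemma key_integral (a b : ℝ) (hb : 0 < b) (hba : b < a) :
    ∫ θ in (0:ℝ)..(2*π), Real.log (a + b * Real.cos θ)
      = (2*π) * Real.log ((a + Real.sqrt (a^2 - b^2)) / 2) := by
  set x := Real.sqrt (a + b) with hxdef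
  set y := Real.sqrt (a - b) with hydef
  set p := (x + y) / 2 with hpdef
  set q := (x - y) / 2 with hqdef
  have hab1 : (0:ℝ) ≤ a + b := by linarith
  have hab2 : (0:ℝ) ≤ a - b := by linarith
  have hx2 : x ^ 2 = a + b := Real.sq_sqrt hab1
  have hy2 : y ^ 2 = a - b := Real.sq_sqrt hab2
  have hy_pos : 0 < y := Real.sqrt_pos.mpr (by linarith)
  have hyx : y < x := Real.sqrt_lt_sqrt hab2 (by linarith)
  have hq : 0 < q := by rw [hqdef]; linarith
  have hpq : q < p := by rw [hpdef, hqdef]; linarith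
  have hxy : x * y = Real.sqrt (a^2 - b^2) := by
    rw [hxdef, hydef, ← Real.sqrt_mul hab1]
    ring_nf
  have hp2 : p ^ 2 = (a + Real.sqrt (a^2 - b^2)) / 2 := by
    rw [hpdef]
    have : ((x + y)/2)^2 = (x^2 + y^2 + 2*(x*y))/4 := by ring
    rw [this, hx2, hy2, hxy]; ring
  -- pointwise identity
  have hpoint : ∀ θ : ℝ, a + b * Real.cos θ
      = ‖(p:ℂ) + q * circleMap 0 1 θ‖ ^ 2 := by
    intro θ
    rw [Complex.sq_norm, Complex.normSq_apply]
    have hre : ((p:ℂ) + q * circleMap 0 1 θ).re = p + q * Real.cos θ := by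
      simp [circleMap, Complex.exp_ofReal_mul_I_re]
    have him : ((p:ℂ) + q * circleMap 0 1 θ).im = q * Real.sin θ := by
      simp [circleMap, Complex.exp_ofReal_mul_I_im]
    rw [hre, him]
    have hs := Real.sin_sq_add_cos_sq θ
    have hpq2 : p^2 + q^2 = a := by
      have : p^2 + q^2 = (x^2 + y^2)/2 := by rw [hpdef, hqdef]; ring
      rw [this, hx2, hy2]; ring
    have h2pq : 2 * (p * q) = b := by
      have : 2 * (p*q) = (x^2 - y^2)/2 := by rw [hpdef, hqdef]; ring
      rw [this, hx2, hy2]; ring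
    linear_combination hpq2 + Real.cos θ * h2pq - q^2 * hs - (Real.cos θ + 1) * hx2 + (Real.cos θ - 1) * hy2
  have habs_pos : ∀ θ : ℝ, 0 < ‖(p:ℂ) + q * circleMap 0 1 θ‖ := by
    intro θ
    have h1 : 0 < a + b * Real.cos θ := by nlinarith [Real.neg_one_le_cos θ]
    have h0 : ((p:ℂ) + q * circleMap 0 1 θ) ≠ 0 := by
      intro h0
      rw [hpoint θ, h0] at h1
      simp at h1
    exact norm_pos_iff.mpr h0
  have hp_pos : 0 < p := lt_trans hq hpq
  have hlog : ∀ θ : ℝ, Real.log (a + b * Real.cos θ)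
      = 2 * (Complex.log ((p:ℂ) + q * circleMap 0 1 θ)).re := by
    intro θ
    rw [hpoint θ, Real.log_pow, Complex.log_re]
    push_cast; ring
  have hcont : Continuous fun θ : ℝ => Complex.log ((p:ℂ) + q * circleMap 0 1 θ) := by
    rw [continuous_iff_continuousAt]
    intro θ
    have hc2 : Continuous fun θ : ℝ => (p:ℂ) + q * circleMap 0 1 θ :=
      continuous_const.add (continuous_const.mul (continuous_circleMap 0 1))
    exact ContinuousAt.comp (g := Complex.log)
      (f := fun θ : ℝ => (p:ℂ) + q * circleMap 0 1 θ) (x := θ)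
      (continuousAt_clog (slit_mem hq.le hpq (z := circleMap 0 1 θ) (by simp)))
      hc2.continuousAt
  calc ∫ θ in (0:ℝ)..(2*π), Real.log (a + b * Real.cos θ)
      = ∫ θ in (0:ℝ)..(2*π), 2 * (Complex.log ((p:ℂ) + q * circleMap 0 1 θ)).re :=
        intervalIntegral.integral_congr fun θ _ => hlog θ
    _ = 2 * ∫ θ in (0:ℝ)..(2*π), (Complex.log ((p:ℂ) + q * circleMap 0 1 θ)).re :=
        intervalIntegral.integral_const_mul 2 _
    _ = 2 * (∫ θ in (0:ℝ)..(2*π), Complex.log ((p:ℂ) + q * circleMap 0 1 θ)).re := by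
        congr 1
        rw [intervalIntegral.integral_of_le (by positivity),
            intervalIntegral.integral_of_le (by positivity)]
        simpa using integral_re (𝕜 := ℂ) hcont.integrableOn_Ioc
    _ = 2 * ((2*π : ℂ) * Complex.log (p:ℂ)).re := by rw [logIntegral p q hq.le hpq]
    _ = (2*π) * Real.log (p^2) := by
        rw [← Complex.ofReal_log hp_pos.le, Real.log_pow]
        simp only [← Complex.ofReal_ofNat, ← Complex.ofReal_mul, Complex.ofReal_re]
        push_cast; ring
    _ = (2*π) * Real.log ((a + Real.sqrt (a^2 - b^2)) / 2) := by rw [hp2]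


open Real in
/-- Closed form of the single-tap amplify-and-forward rate with
equal power allocation and fully correlated noises (`ρz = 1`). With
`N(ω) = 1 + α²h_RD² + 2αh_RD·cos ω`,
`|H(ω)|² = h_SD² + α²h_RD²h_SR² + 2αh_SD h_RD h_SR·cos ω`,
`A = 1 + h_SD² + α²h_RD²(1 + h_SR²)` and `B = 2αh_RD(1 + h_SD·h_SR)`:
`(1/(4π))·∫₀^{2π} log₂((N(ω) + |H(ω)|²)/N(ω)) dω
  = ½·log₂((A + √(A² - B²))/(1 + α²h_RD² + |1 - α²h_RD²|))`. -/
theorem af_rate_closed_form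
    (hSD hSR hRD α : ℝ)
    (hSD_pos : 0 < hSD) (hSR_pos : 0 < hSR) (hRD_pos : 0 < hRD)
    (hα_pos : 0 < α) (hα_ub : α ≤ 1 / Real.sqrt (1 + hSR^2))
    (hne : hSD ≠ hSR) (hαRD : α * hRD ≠ 1) :
    (1 / (4 * π)) * ∫ ω in (0:ℝ)..(2 * π),
        Real.logb 2
          (((1 + α^2*hRD^2 + 2*α*hRD*Real.cos ω)
              + (hSD^2 + α^2*hRD^2*hSR^2 + 2*α*hSD*hRD*hSR*Real.cos ω))
            / (1 + α^2*hRD^2 + 2*α*hRD*Real.cos ω))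
      = 1/2 * Real.logb 2
          (((1 + hSD^2 + α^2*hRD^2*(1 + hSR^2))
              + Real.sqrt ((1 + hSD^2 + α^2*hRD^2*(1 + hSR^2))^2
                  - (2*α*hRD*(1 + hSD*hSR))^2))
            / (1 + α^2*hRD^2 + |1 - α^2*hRD^2|)) := by
  have hc_pos : 0 < α * hRD := mul_pos hα_pos hRD_pos
  have h1sq : 0 < (1 - α*hRD)^2 := by
    have : (1 : ℝ) - α*hRD ≠ 0 := sub_ne_zero.mpr (Ne.symm hαRD)
    positivity
  set A : ℝ := 1 + hSD^2 + α^2*hRD^2*(1 + hSR^2) with hAdef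
  set B : ℝ := 2*α*hRD*(1 + hSD*hSR) with hBdef
  have h3 : (0:ℝ) < 1 + hSD*hSR := by nlinarith [mul_pos hSD_pos hSR_pos]
  have hB_pos : 0 < B := by rw [hBdef]; nlinarith [mul_pos hc_pos h3]
  have hAB : B < A := by
    rw [hAdef, hBdef]
    nlinarith [h1sq, sq_nonneg (hSD - α*hRD*hSR)]
  have hA_pos : 0 < A := lt_trans hB_pos hAB
  have hden_lt : 2*(α*hRD) < 1 + (α*hRD)^2 := by nlinarith [h1sq]
  -- positivity of integrand pieces
  have hcos1 : ∀ ω : ℝ, (0:ℝ) ≤ 1 + Real.cos ω := fun ω => by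
    nlinarith [Real.neg_one_le_cos ω]
  have hNpos : ∀ ω : ℝ, (0:ℝ) < 1 + (α*hRD)^2 + 2*(α*hRD)*Real.cos ω := by
    intro ω
    nlinarith [h1sq, mul_nonneg hc_pos.le (hcos1 ω)]
  have hMpos : ∀ ω : ℝ, (0:ℝ) < A + B * Real.cos ω := by
    intro ω
    nlinarith [hAB, mul_nonneg hB_pos.le (hcos1 ω)]
  -- rewrite integrand
  have hint : ∀ ω ∈ Set.uIcc (0:ℝ) (2*π),
      Real.logb 2
          (((1 + α^2*hRD^2 + 2*α*hRD*Real.cos ω)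
              + (hSD^2 + α^2*hRD^2*hSR^2 + 2*α*hSD*hRD*hSR*Real.cos ω))
            / (1 + α^2*hRD^2 + 2*α*hRD*Real.cos ω))
        = (Real.log (A + B*Real.cos ω)
            - Real.log (1 + (α*hRD)^2 + 2*(α*hRD)*Real.cos ω)) / Real.log 2 := by
    intro ω _
    have e1 : (1 + α^2*hRD^2 + 2*α*hRD*Real.cos ω)
        + (hSD^2 + α^2*hRD^2*hSR^2 + 2*α*hSD*hRD*hSR*Real.cos ω) = A + B*Real.cos ω := by
      rw [hAdef, hBdef]; ring
    have e2 : 1 + α^2*hRD^2 + 2*α*hRD*Real.cos ω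
        = 1 + (α*hRD)^2 + 2*(α*hRD)*Real.cos ω := by ring
    rw [e1, e2, Real.logb, Real.log_div (hMpos ω).ne' (hNpos ω).ne']
  rw [intervalIntegral.integral_congr hint]
  -- integrability
  have hi1 : IntervalIntegrable (fun ω => Real.log (A + B*Real.cos ω)) MeasureTheory.volume 0 (2*π) :=
    (Continuous.log (continuous_const.add (continuous_const.mul Real.continuous_cos)) fun ω => (hMpos ω).ne').intervalIntegrable _ _
  have hi2 : IntervalIntegrable (fun ω => Real.log (1 + (α*hRD)^2 + 2*(α*hRD)*Real.cos ω))
      MeasureTheory.volume 0 (2*π) :=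
    (Continuous.log (continuous_const.add (continuous_const.mul Real.continuous_cos)) fun ω => (hNpos ω).ne').intervalIntegrable _ _
  rw [intervalIntegral.integral_div, intervalIntegral.integral_sub hi1 hi2,
    key_integral A B hB_pos hAB,
    key_integral (1 + (α*hRD)^2) (2*(α*hRD)) (by positivity) hden_lt]
  -- simplify the second sqrt
  have hs2 : Real.sqrt ((1 + (α*hRD)^2)^2 - (2*(α*hRD))^2) = |1 - α^2*hRD^2| := by
    rw [show (1 + (α*hRD)^2)^2 - (2*(α*hRD))^2 = (1 - α^2*hRD^2)^2 by ring,
      Real.sqrt_sq_eq_abs]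
  rw [hs2]
  -- final algebra
  set S : ℝ := Real.sqrt (A^2 - B^2) with hSdef
  have hS_nonneg : 0 ≤ S := Real.sqrt_nonneg _
  have hX_pos : 0 < A + S := by linarith
  have hY_pos : (0:ℝ) < 1 + α^2*hRD^2 + |1 - α^2*hRD^2| := by positivity
  have hY2_pos : (0:ℝ) < 1 + (α*hRD)^2 + |1 - α^2*hRD^2| := by positivity
  have hlog2 : Real.log 2 ≠ 0 := (Real.log_pos (by norm_num)).ne'
  have eY : (1:ℝ) + (α*hRD)^2 + |1 - α^2*hRD^2| = 1 + α^2*hRD^2 + |1 - α^2*hRD^2| := by ring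
  rw [eY, Real.logb, Real.log_div hX_pos.ne' hY_pos.ne',
    Real.log_div hX_pos.ne' (by norm_num : (2:ℝ) ≠ 0),
    Real.log_div hY_pos.ne' (by norm_num : (2:ℝ) ≠ 0)]
  field_simp
  ring
end

section
/- The single-tap amplify-and-forward gap to the cut-set bound is unbounded when the noises are fully correlated: for every M > 0 there exist channel gains h_SD, h_SR, h_RD > 0 with h_SD ≠ h_SR and h_RD² > 1 + h_SR² such that, with α := 1/√(1 + h_SR²), ½·log₂(1 + (h_SD + h_RD)²) − (1/(4π))·∫₀^{2π} log₂( 1 + |H(ω)|²/N(ω) ) dω > M. -/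
open Real

private lemma af_key_bound (a c : ℝ) (ha : 2 ≤ a) (hc : -1 ≤ c) (hc' : c ≤ 1) :
    0 < 1 + a^2 + 2*a*c ∧
    1 ≤ 1 + (1 + 4*a^2 + 4*a*c)/(1 + a^2 + 2*a*c) ∧
    1 + (1 + 4*a^2 + 4*a*c)/(1 + a^2 + 2*a*c) ≤ 26 := by
  have hD : 0 < 1 + a^2 + 2*a*c := by nlinarith
  refine ⟨hD, ?_, ?_⟩
  · have h0 : 0 ≤ (1 + 4*a^2 + 4*a*c)/(1 + a^2 + 2*a*c) :=
      div_nonneg (by nlinarith) hD.le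
    linarith
  · have h25 : (1 + 4*a^2 + 4*a*c)/(1 + a^2 + 2*a*c) ≤ 25 := by
      rw [div_le_iff₀ hD]; nlinarith
    linarith

open Real in
/-- The single-tap amplify-and-forward gap to the cut-set bound
(at noise correlation `ρz = 1`) is unbounded: for every `M > 0` there exist
gains `h_SD, h_SR, h_RD > 0` with `h_SD ≠ h_SR` and `h_RD² > 1 + h_SR²` such
that, with `α = 1/√(1 + h_SR²)`,
`½·log₂(1 + (h_SD + h_RD)²) - (1/(4π))·∫₀^{2π} log₂(1 + |H(ω)|²/N(ω)) dω > M`. -/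
theorem af_gap_unbounded (M : ℝ) (hM : 0 < M) :
    ∃ hSD hSR hRD : ℝ, 0 < hSD ∧ 0 < hSR ∧ 0 < hRD ∧
      hSD ≠ hSR ∧ 1 + hSR^2 < hRD^2 ∧
      (1/2 * Real.logb 2 (1 + (hSD + hRD)^2))
        - (1 / (4 * π)) * (∫ ω in (0:ℝ)..(2 * π),
            Real.logb 2
              (1 + (hSD^2 + (1 / Real.sqrt (1 + hSR^2))^2*hRD^2*hSR^2
                      + 2*(1 / Real.sqrt (1 + hSR^2))*hSD*hRD*hSR*Real.cos ω)
                / (1 + (1 / Real.sqrt (1 + hSR^2))^2*hRD^2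
                      + 2*(1 / Real.sqrt (1 + hSR^2))*hRD*Real.cos ω)))
        > M := by
  have hπ : 0 < π := Real.pi_pos
  set R : ℝ := (2:ℝ) ^ (M + 5) with hRdef
  have hRpos : 0 < R := Real.rpow_pos_of_pos (by norm_num) _
  have hR32 : (32:ℝ) ≤ R := by
    have h1 : (2:ℝ) ^ (5:ℝ) ≤ (2:ℝ) ^ (M + 5) :=
      Real.rpow_le_rpow_of_exponent_le (by norm_num) (by linarith)
    calc (32:ℝ) = (2:ℝ) ^ (5:ℝ) := by
          rw [show (5:ℝ) = ((5:ℕ):ℝ) by norm_num, Real.rpow_natCast]; norm_num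
      _ ≤ R := h1
  refine ⟨1, 2, R, one_pos, two_pos, hRpos, by norm_num, by nlinarith, ?_⟩
  have h5 : (1:ℝ) + (2:ℝ)^2 = 5 := by norm_num
  rw [h5]
  set s : ℝ := Real.sqrt 5 with hsdef
  have hs2 : s ^ 2 = 5 := Real.sq_sqrt (by norm_num)
  have hspos : 0 < s := Real.sqrt_pos.mpr (by norm_num)
  have hs3 : s ≤ 3 := by nlinarith
  set a : ℝ := R / s with hadef
  have ha2 : 2 ≤ a := by
    rw [hadef, le_div_iff₀ hspos]; nlinarith
  -- rewrite the integrand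
  have hbody : ∀ ω : ℝ,
      Real.logb 2 (1 + ((1:ℝ)^2 + (1 / s)^2*R^2*2^2 + 2*(1 / s)*1*R*2*Real.cos ω)
          / (1 + (1 / s)^2*R^2 + 2*(1 / s)*R*Real.cos ω))
        = Real.logb 2 (1 + (1 + 4*a^2 + 4*a*Real.cos ω)
            / (1 + a^2 + 2*a*Real.cos ω)) := by
    intro ω
    congr 1
    rw [hadef]
    congr 1 <;> ring
  simp only [hbody]
  -- bounds on the integrand
  have hDpos : ∀ ω : ℝ, 0 < 1 + a^2 + 2*a*Real.cos ω := fun ω =>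
    (af_key_bound a _ ha2 (Real.neg_one_le_cos ω) (Real.cos_le_one ω)).1
  have harg1 : ∀ ω : ℝ, 1 ≤ 1 + (1 + 4*a^2 + 4*a*Real.cos ω)/(1 + a^2 + 2*a*Real.cos ω) :=
    fun ω => (af_key_bound a _ ha2 (Real.neg_one_le_cos ω) (Real.cos_le_one ω)).2.1
  have harg26 : ∀ ω : ℝ, 1 + (1 + 4*a^2 + 4*a*Real.cos ω)/(1 + a^2 + 2*a*Real.cos ω) ≤ 26 :=
    fun ω => (af_key_bound a _ ha2 (Real.neg_one_le_cos ω) (Real.cos_le_one ω)).2.2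
  set L : ℝ := Real.logb 2 26 with hLdef
  -- continuity / integrability
  have hcont : Continuous fun ω : ℝ =>
      Real.logb 2 (1 + (1 + 4*a^2 + 4*a*Real.cos ω)/(1 + a^2 + 2*a*Real.cos ω)) := by
    have hc1 : Continuous fun ω : ℝ =>
        (1 + (1 + 4*a^2 + 4*a*Real.cos ω)/(1 + a^2 + 2*a*Real.cos ω)) := by
      apply Continuous.add continuous_const
      exact Continuous.div (by continuity) (by continuity) (fun ω => (hDpos ω).ne')
    have := (hc1.log (fun ω => by have := harg1 ω; positivity)).div_const (Real.log 2)
    simpa [Real.logb] using this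
  have hint : IntervalIntegrable (fun ω : ℝ =>
      Real.logb 2 (1 + (1 + 4*a^2 + 4*a*Real.cos ω)/(1 + a^2 + 2*a*Real.cos ω)))
      MeasureTheory.volume 0 (2*π) := hcont.intervalIntegrable _ _
  -- bound the integral
  have hIle : (∫ ω in (0:ℝ)..(2*π),
      Real.logb 2 (1 + (1 + 4*a^2 + 4*a*Real.cos ω)/(1 + a^2 + 2*a*Real.cos ω)))
      ≤ 2 * π * L := by
    have h1 : (∫ ω in (0:ℝ)..(2*π),
        Real.logb 2 (1 + (1 + 4*a^2 + 4*a*Real.cos ω)/(1 + a^2 + 2*a*Real.cos ω)))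
        ≤ ∫ _ω in (0:ℝ)..(2*π), L := by
      apply intervalIntegral.integral_mono_on (by positivity) hint
        intervalIntegrable_const
      intro x _
      exact (Real.logb_le_logb (by norm_num)
        (lt_of_lt_of_le one_pos (harg1 x)) (by norm_num)).mpr (harg26 x)
    rw [intervalIntegral.integral_const] at h1
    simpa using h1
  -- bound the constant L
  have hL5 : L ≤ 5 := by
    have h32 : Real.logb 2 32 = 5 := by
      rw [show (32:ℝ) = 2^(5:ℕ) by norm_num, Real.logb_pow]
      simp [Real.logb_self_eq_one]
    calc L ≤ Real.logb 2 32 := by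
          exact (Real.logb_le_logb (by norm_num) (by norm_num) (by norm_num)).mpr
            (by norm_num)
      _ = 5 := h32
  have hLnonneg : 0 ≤ L := by
    rw [hLdef]
    exact Real.logb_nonneg (by norm_num) (by norm_num)
  -- bound the cut-set term
  have hlogR : Real.logb 2 R = M + 5 :=
    Real.logb_rpow (by norm_num) (by norm_num)
  have hC : M + 5 ≤ 1/2 * Real.logb 2 (1 + (1 + R)^2) := by
    have h1 : Real.logb 2 (R^2) ≤ Real.logb 2 (1 + (1 + R)^2) := by
      exact (Real.logb_le_logb (by norm_num) (by positivity) (by positivity)).mpr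
        (by nlinarith)
    rw [Real.logb_pow, hlogR] at h1
    push_cast at h1
    linarith
  -- finish
  have hmul : (1 / (4 * π)) * (∫ ω in (0:ℝ)..(2*π),
      Real.logb 2 (1 + (1 + 4*a^2 + 4*a*Real.cos ω)/(1 + a^2 + 2*a*Real.cos ω)))
      ≤ (1 / (4 * π)) * (2 * π * L) :=
    mul_le_mul_of_nonneg_left hIle (by positivity)
  have heq : (1 / (4 * π)) * (2 * π * L) = L / 2 := by
    field_simp; ring
  rw [heq] at hmul
  linarith
end
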